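/- For every n ≥ 1, Σ_{m=1}^{n} (n−1)^{\underline{m−1}} · S(n,m) = n^{n−1}, where (n−1)^{\underline{m−1}} = (n−1)(n−2)⋯(n−m+1) is a falling factorial and S(n,m) is the Stirling number of the second kind; equivalently, summing the counts F_{n,m} of Cayley trees of size n with exactly m ascending runs over all m recovers Cayley's formula n^{n−1}. -/

import Mathlib

/-- The Stirling number of the second kind `S(n,m)`: the number of partitions of
an `n`-element set into `m` nonempty blocks. -/
noncomputable def stirlingSecond (n m : ℕ) : ℕ :=
  Nat.card {P : Finpartition (Finset.univ : Finset (Fin n)) // P.parts.card = m}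

open Finset

variable {n k : ℕ}

noncomputable def fiberPartition (f : Fin n → Fin k) :
    Finpartition (Finset.univ : Finset (Fin n)) :=
  @Finpartition.ofSetoid _ _ _ (Setoid.ker f)
    (fun a b => inferInstanceAs (Decidable (f a = f b)))

lemma mem_part_fiberPartition (f : Fin n → Fin k) (a b : Fin n) :
    b ∈ (fiberPartition f).part a ↔ f a = f b :=
  @Finpartition.mem_part_ofSetoid_iff_rel _ _ a _ (Setoid.ker f)
    (fun a b => inferInstanceAs (Decidable (f a = f b))) b

lemma Finpartition.eq_of_part_eq {α : Type*} [DecidableEq α] {s : Finset α}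
    {P Q : Finpartition s} (h : ∀ a ∈ s, P.part a = Q.part a) : P = Q := by
  ext t
  constructor
  · intro ht
    obtain ⟨a, ha, rfl⟩ := P.part_surjOn ht
    rw [h a ha]; exact Q.part_mem.2 ha
  · intro ht
    obtain ⟨a, ha, rfl⟩ := Q.part_surjOn ht
    rw [← h a ha]; exact P.part_mem.2 ha

lemma fiberPartition_eq_iff (f : Fin n → Fin k)
    (P : Finpartition (Finset.univ : Finset (Fin n))) :
    fiberPartition f = P ↔ ∀ a b, f a = f b ↔ P.part a = P.part b := by
  constructor
  · rintro rfl a b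
    rw [← mem_part_fiberPartition f a b,
      Finpartition.mem_part_iff_part_eq_part (P := fiberPartition f) (mem_univ b) (mem_univ a)]
    exact eq_comm
  · intro h
    refine Finpartition.eq_of_part_eq fun a _ => ?_
    ext b
    rw [mem_part_fiberPartition, h a b,
      Finpartition.mem_part_iff_part_eq_part (P := P) (mem_univ b) (mem_univ a)]
    exact eq_comm

noncomputable def glue (P : Finpartition (Finset.univ : Finset (Fin n)))
    (g : ↥P.parts ↪ Fin k) : Fin n → Fin k :=
  fun a => g ⟨P.part a, P.part_mem.2 (mem_univ a)⟩

lemma fiberPartition_glue (P : Finpartition (Finset.univ : Finset (Fin n)))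
    (g : ↥P.parts ↪ Fin k) : fiberPartition (glue P g) = P := by
  rw [fiberPartition_eq_iff]
  intro a b
  constructor
  · intro h
    exact congrArg Subtype.val (g.injective h)
  · intro h
    exact congrArg g (Subtype.ext h)

lemma card_fiber (P : Finpartition (Finset.univ : Finset (Fin n))) :
    Nat.card {f : Fin n → Fin k // fiberPartition f = P}
      = k.descFactorial P.parts.card := by
  classical
  set G : (↥P.parts ↪ Fin k) → {f : Fin n → Fin k // fiberPartition f = P} :=
    fun g => ⟨glue P g, fiberPartition_glue P g⟩ with hGdef
  have hG : Function.Bijective G := by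
    constructor
    · intro g g' h
      have h' : glue P g = glue P g' := congrArg Subtype.val h
      ext ⟨t, ht⟩
      obtain ⟨a, ha⟩ := P.nonempty_of_mem_parts ht
      have hpa : P.part a = t := P.part_eq_of_mem ht ha
      have := congrFun h' a
      simp only [glue] at this
      rw [show (⟨P.part a, P.part_mem.2 (mem_univ a)⟩ : ↥P.parts) = ⟨t, ht⟩ from
        Subtype.ext hpa] at this
      exact congrArg Fin.val this
    · rintro ⟨f, hf⟩
      have hf' := (fiberPartition_eq_iff f P).1 hf
      have hg : ∀ t : ↥P.parts, (P.nonempty_of_mem_parts t.2).choose ∈ t.1 :=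
        fun t => (P.nonempty_of_mem_parts t.2).choose_spec
      refine ⟨⟨fun t => f (P.nonempty_of_mem_parts t.2).choose, ?_⟩, ?_⟩
      · intro t u h
        have h1 : P.part (P.nonempty_of_mem_parts t.2).choose = t.1 :=
          P.part_eq_of_mem t.2 (hg t)
        have h2 : P.part (P.nonempty_of_mem_parts u.2).choose = u.1 :=
          P.part_eq_of_mem u.2 (hg u)
        exact Subtype.ext (h1 ▸ h2 ▸ (hf' _ _).1 h)
      · apply Subtype.ext
        funext a
        show glue P _ a = f a
        simp only [glue, Function.Embedding.coeFn_mk]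
        have hc := hg ⟨P.part a, P.part_mem.2 (mem_univ a)⟩
        have : P.part (P.nonempty_of_mem_parts (P.part_mem.2 (mem_univ a))).choose
            = P.part a := P.part_eq_of_mem (P.part_mem.2 (mem_univ a)) hc
        exact ((hf' _ _).2 this.symm).symm
  rw [← Nat.card_congr (Equiv.ofBijective G hG), Nat.card_eq_fintype_card,
    Fintype.card_embedding_eq, Fintype.card_fin, Fintype.card_coe]

lemma sum_stirling (n k : ℕ) :
    ∑ m ∈ range (n + 1), stirlingSecond n m * k.descFactorial m = k ^ n := by
  classical
  have h1 : k ^ n = Nat.card (Fin n → Fin k) := by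
    simp [Nat.card_eq_fintype_card]
  have h2 : Nat.card (Fin n → Fin k)
      = ∑ P : Finpartition (Finset.univ : Finset (Fin n)),
          Nat.card {f : Fin n → Fin k // fiberPartition f = P} := by
    rw [Nat.card_congr (Equiv.sigmaFiberEquiv (fiberPartition (n := n) (k := k))).symm]
    simp [Nat.card_eq_fintype_card, Fintype.card_sigma]
  rw [h1, h2]
  simp only [card_fiber]
  rw [← Finset.sum_fiberwise_of_maps_to (g := fun P : Finpartition (Finset.univ : Finset (Fin n)) => P.parts.card)
    (fun P _ => mem_range.2 (Nat.lt_succ_of_le (by simpa using P.card_parts_le_card)))]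
  refine Finset.sum_congr rfl fun m _ => ?_
  rw [Finset.sum_congr rfl (fun P hP => by rw [(mem_filter.1 hP).2]),
    Finset.sum_const, smul_eq_mul]
  congr 1
  rw [stirlingSecond, Nat.card_eq_fintype_card, Fintype.card_subtype]

lemma stirling_zero (n : ℕ) (hn : 1 ≤ n) : stirlingSecond n 0 = 0 := by
  rw [stirlingSecond]
  have : IsEmpty {P : Finpartition (Finset.univ : Finset (Fin n)) // P.parts.card = 0} := by
    constructor
    rintro ⟨P, hP⟩
    rw [Finset.card_eq_zero, Finpartition.parts_eq_empty_iff] at hP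
    have h0 : (⟨0, hn⟩ : Fin n) ∈ (Finset.univ : Finset (Fin n)) := mem_univ _
    rw [hP] at h0
    simp at h0
  exact Nat.card_of_isEmpty


/-- Summing the counts `F_{n,m} = (n-1)^{\underline{m-1}} · S(n,m)` of Cayley trees
of size `n` with exactly `m` ascending runs over all `m` recovers Cayley's formula
`n^{n-1}`. -/
theorem sum_descFactorial_mul_stirling (n : ℕ) (hn : 1 ≤ n) :
    ∑ m ∈ Finset.Icc 1 n, (n - 1).descFactorial (m - 1) * stirlingSecond n m
      = n ^ (n - 1) := by
  have key : ∑ m ∈ Finset.Icc 1 n, stirlingSecond n m * n.descFactorial m = n ^ n := by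
    rw [← sum_stirling n n]
    refine Finset.sum_subset ?_ ?_
    · intro m hm
      rw [mem_Icc] at hm
      exact mem_range.2 (Nat.lt_succ_of_le hm.2)
    · intro m hm hm'
      rw [mem_range] at hm
      rw [mem_Icc, not_and_or] at hm'
      have hm0 : m = 0 := by omega
      rw [hm0, stirling_zero n hn, zero_mul]
  have hmul : n * ∑ m ∈ Finset.Icc 1 n, (n - 1).descFactorial (m - 1) * stirlingSecond n m
      = n * n ^ (n - 1) := by
    rw [Finset.mul_sum]
    have : ∀ m ∈ Finset.Icc 1 n,
        n * ((n - 1).descFactorial (m - 1) * stirlingSecond n m)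
          = stirlingSecond n m * n.descFactorial m := by
      intro m hm
      rw [mem_Icc] at hm
      obtain ⟨m, rfl⟩ := Nat.exists_eq_add_of_le hm.1
      obtain ⟨n', rfl⟩ := Nat.exists_eq_add_of_le hn
      simp only [Nat.add_sub_cancel_left, Nat.succ_descFactorial_succ]
      ring_nf
      rw [Nat.add_comm 1 m, Nat.add_comm 1 n', Nat.succ_descFactorial_succ]
      ring
    rw [Finset.sum_congr rfl this, key,
      show n ^ n = n ^ (n - 1 + 1) from by rw [Nat.sub_add_cancel hn], pow_succ]
    ring
  exact Nat.eq_of_mul_eq_mul_left (by omega) hmul
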